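/- arXiv:1903.09191 — 2 statements merged into one kernel-verified Lean document; each statement's English description precedes it below -/
import Mathlib

section
/- Let 1 → F → G → H → 1 be a split short exact sequence of groups such that the induced action of H on the abelianization F/[F,F] is trivial. Then for each k ≥ 1, the induced sequence 1 → F/Γ^k F → G/Γ^k G → H/Γ^k H → 1 is exact, where Γ^k denotes the k-th term of the lower central series. -/
open scoped commutatorElement

section FRaux

variable {G : Type*} [Group G]

theorem FRmem_iff_mk_eq {N : Subgroup G} [hN : N.Normal] {a b : G} :
    a * b⁻¹ ∈ N ↔ (QuotientGroup.mk a : G ⧸ N) = QuotientGroup.mk b := by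
  constructor
  · intro h
    rw [QuotientGroup.eq]
    have h2 := N.inv_mem h
    simpa [mul_assoc] using hN.conj_mem _ h2 a⁻¹
  · intro h
    rw [QuotientGroup.eq] at h
    have h2 := N.inv_mem h
    simpa [mul_assoc] using hN.conj_mem _ h2 a

theorem FRquotCommute {N : Subgroup G} [hN : N.Normal] {a b : G} (h : ⁅a, b⁆ ∈ N) :
    (QuotientGroup.mk a : G ⧸ N) * QuotientGroup.mk b
      = QuotientGroup.mk b * QuotientGroup.mk a := by
  have h1 : (QuotientGroup.mk ⁅a, b⁆ : G ⧸ N) = 1 := (QuotientGroup.eq_one_iff _).mpr h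
  have h2 : (QuotientGroup.mk ⁅a, b⁆ : G ⧸ N)
      = ⁅(QuotientGroup.mk a : G ⧸ N), QuotientGroup.mk b⁆ := by
    simp [commutatorElement_def]
  rw [h2] at h1
  exact commutatorElement_eq_one_iff_mul_comm.mp h1

theorem FRthree {A B C N : Subgroup G} [N.Normal]
    (h1 : ⁅⁅B, C⁆, A⁆ ≤ N) (h2 : ⁅⁅C, A⁆, B⁆ ≤ N) : ⁅⁅A, B⁆, C⁆ ≤ N := by
  rw [← QuotientGroup.ker_mk' N, ← Subgroup.map_eq_bot_iff] at h1 h2 ⊢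
  rw [Subgroup.map_commutator, Subgroup.map_commutator] at h1 h2 ⊢
  exact Subgroup.commutator_commutator_eq_bot_of_rotate h1 h2

theorem FRlcs_comm : ∀ (n m : ℕ),
    ⁅(⊤ : Subgroup G).lowerCentralSeries m, (⊤ : Subgroup G).lowerCentralSeries n⁆ ≤ (⊤ : Subgroup G).lowerCentralSeries (m + n + 1) := by
  intro n
  induction n with
  | zero =>
    intro m
    rw [Subgroup.lowerCentralSeries_zero]
    exact le_of_eq rfl
  | succ n ih =>
    intro m
    rw [Subgroup.commutator_comm]
    have e : (⊤ : Subgroup G).lowerCentralSeries (n + 1) = ⁅(⊤ : Subgroup G).lowerCentralSeries n, ⊤⁆ := rfl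
    rw [e]
    apply FRthree
    · -- ⁅⁅⊤, lcs m⁆, lcs n⁆ ≤ lcs (m + (n+1) + 1)
      rw [Subgroup.commutator_comm (⊤ : Subgroup G)]
      have e2 : ⁅(⊤ : Subgroup G).lowerCentralSeries m, (⊤ : Subgroup G)⁆ = (⊤ : Subgroup G).lowerCentralSeries (m + 1) := rfl
      rw [e2]
      have := ih (m + 1)
      have harith : m + 1 + n + 1 = m + (n + 1) + 1 := by omega
      rwa [harith] at this
    · -- ⁅⁅lcs m, lcs n⁆, ⊤⁆ ≤ lcs (m + (n+1) + 1)
      calc ⁅⁅(⊤ : Subgroup G).lowerCentralSeries m, (⊤ : Subgroup G).lowerCentralSeries n⁆, (⊤ : Subgroup G)⁆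
          ≤ ⁅(⊤ : Subgroup G).lowerCentralSeries (m + n + 1), (⊤ : Subgroup G)⁆ :=
            Subgroup.commutator_mono (ih m) le_rfl
        _ = (⊤ : Subgroup G).lowerCentralSeries (m + n + 1 + 1) := rfl
        _ = (⊤ : Subgroup G).lowerCentralSeries (m + (n + 1) + 1) := by norm_num [Nat.add_assoc]

theorem FRcommAux {Q : Type*} [Group Q] (U V X Y : Q) (hU : ∀ q : Q, U * q = q * U)
    (hXV : X * V = V * X) (hCV : ⁅X, Y⁆ * V = V * ⁅X, Y⁆) : ⁅U * X, V * Y⁆ = ⁅X, Y⁆ := by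
  have hUc : ∀ z : Q, U * z * U⁻¹ = z := by
    intro z; rw [hU z]; group
  calc ⁅U * X, V * Y⁆ = (U * (X * (V * Y) * X⁻¹) * U⁻¹) * (V * Y)⁻¹ := by
        rw [commutatorElement_def]; group
    _ = (X * (V * Y) * X⁻¹) * (V * Y)⁻¹ := by rw [hUc]
    _ = X * V * (Y * X⁻¹ * Y⁻¹) * V⁻¹ := by group
    _ = V * X * (Y * X⁻¹ * Y⁻¹) * V⁻¹ := by rw [hXV]
    _ = V * ⁅X, Y⁆ * V⁻¹ := by rw [commutatorElement_def]; group
    _ = ⁅X, Y⁆ * V * V⁻¹ := by rw [← hCV]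
    _ = ⁅X, Y⁆ := by group

end FRaux
section FRkey

variable {F H : Type*} [Group F] [Group H]

/-- Given the level-`I` base case (action of `Γ^I H` trivial on `F` mod `Γ^{I+1} F`),
propagate to all `j`. -/
theorem FRkeyLevel (θ : H →* MulAut F) (I : ℕ)
    (hA : ∀ h ∈ (⊤ : Subgroup H).lowerCentralSeries I, ∀ f : F, θ h f * f⁻¹ ∈ (⊤ : Subgroup F).lowerCentralSeries (I + 1)) :
    ∀ j, ∀ h ∈ (⊤ : Subgroup H).lowerCentralSeries I, ∀ f ∈ (⊤ : Subgroup F).lowerCentralSeries j,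
      θ h f * f⁻¹ ∈ (⊤ : Subgroup F).lowerCentralSeries (I + j + 1) := by
  intro j
  induction j with
  | zero => intro h hh f _; exact hA h hh f
  | succ j ih =>
    intro h hh f hf
    rw [FRmem_iff_mk_eq (N := (⊤ : Subgroup F).lowerCentralSeries (I + (j + 1) + 1))]
    set N := (⊤ : Subgroup F).lowerCentralSeries (I + (j + 1) + 1) with hNdef
    let S : Subgroup F :=
      { carrier := {x | (QuotientGroup.mk (θ h x) : F ⧸ N) = QuotientGroup.mk x}
        one_mem' := by simp
        mul_mem' := by
          intro a b ha hb
          simp only [Set.mem_setOf_eq] at ha hb ⊢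
          rw [map_mul, QuotientGroup.mk_mul, QuotientGroup.mk_mul, ha, hb]
        inv_mem' := by
          intro a ha
          simp only [Set.mem_setOf_eq] at ha ⊢
          rw [map_inv, QuotientGroup.mk_inv, QuotientGroup.mk_inv, ha] }
    suffices hs : (⊤ : Subgroup F).lowerCentralSeries (j + 1) ≤ S from hs hf
    have e : (⊤ : Subgroup F).lowerCentralSeries (j + 1) = ⁅(⊤ : Subgroup F).lowerCentralSeries j, ⊤⁆ := rfl
    rw [e, Subgroup.commutator_le]
    intro x hx y _
    show (QuotientGroup.mk (θ h ⁅x, y⁆) : F ⧸ N) = QuotientGroup.mk ⁅x, y⁆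
    have hcxy : θ h ⁅x, y⁆ = ⁅θ h x, θ h y⁆ := by
      simp [commutatorElement_def, map_mul, map_inv]
    have hum : θ h x * x⁻¹ ∈ (⊤ : Subgroup F).lowerCentralSeries (I + j + 1) := ih h hh x hx
    have hvm : θ h y * y⁻¹ ∈ (⊤ : Subgroup F).lowerCentralSeries (I + 1) := hA h hh y
    set u := θ h x * x⁻¹ with hu
    set v := θ h y * y⁻¹ with hv
    have ex : θ h x = u * x := by rw [hu]; group
    have ey : θ h y = v * y := by rw [hv]; group
    -- the three commutation facts in the quotient
    have hU : ∀ g : F, (QuotientGroup.mk u : F ⧸ N) * QuotientGroup.mk g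
        = QuotientGroup.mk g * QuotientGroup.mk u := by
      intro g
      apply FRquotCommute
      show ⁅u, g⁆ ∈ (⊤ : Subgroup F).lowerCentralSeries (I + (j + 1) + 1)
      have : ⁅u, g⁆ ∈ ⁅(⊤ : Subgroup F).lowerCentralSeries (I + j + 1), (⊤ : Subgroup F)⁆ :=
        Subgroup.commutator_mem_commutator hum (Subgroup.mem_top g)
      have e2 : ⁅(⊤ : Subgroup F).lowerCentralSeries (I + j + 1), (⊤ : Subgroup F)⁆
          = (⊤ : Subgroup F).lowerCentralSeries (I + (j + 1) + 1) := rfl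
      rwa [e2] at this
    have hXV : (QuotientGroup.mk x : F ⧸ N) * QuotientGroup.mk v
        = QuotientGroup.mk v * QuotientGroup.mk x := by
      apply FRquotCommute
      show ⁅x, v⁆ ∈ (⊤ : Subgroup F).lowerCentralSeries (I + (j + 1) + 1)
      have : ⁅x, v⁆ ∈ ⁅(⊤ : Subgroup F).lowerCentralSeries j, (⊤ : Subgroup F).lowerCentralSeries (I + 1)⁆ :=
        Subgroup.commutator_mem_commutator hx hvm
      have h2 := FRlcs_comm (G := F) (I + 1) j this
      have harith : j + (I + 1) + 1 = I + (j + 1) + 1 := by omega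
      rwa [harith] at h2
    have hCV : (⁅(QuotientGroup.mk x : F ⧸ N), (QuotientGroup.mk y : F ⧸ N)⁆) * (QuotientGroup.mk v : F ⧸ N)
        = (QuotientGroup.mk v : F ⧸ N) * ⁅(QuotientGroup.mk x : F ⧸ N), (QuotientGroup.mk y : F ⧸ N)⁆ := by
      have hmkc : (⁅(QuotientGroup.mk x : F ⧸ N), (QuotientGroup.mk y : F ⧸ N)⁆)
          = QuotientGroup.mk ⁅x, y⁆ := by simp [commutatorElement_def]
      rw [hmkc]
      apply FRquotCommute
      show ⁅⁅x, y⁆, v⁆ ∈ (⊤ : Subgroup F).lowerCentralSeries (I + (j + 1) + 1)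
      have hxy : ⁅x, y⁆ ∈ (⊤ : Subgroup F).lowerCentralSeries (j + 1) :=
        Subgroup.commutator_mem_commutator hx (Subgroup.mem_top y)
      have : ⁅⁅x, y⁆, v⁆ ∈ ⁅(⊤ : Subgroup F).lowerCentralSeries (j + 1), (⊤ : Subgroup F).lowerCentralSeries (I + 1)⁆ :=
        Subgroup.commutator_mem_commutator hxy hvm
      have h2 := FRlcs_comm (G := F) (I + 1) (j + 1) this
      refine Subgroup.lowerCentralSeries_antitone _ ?_ h2
      omega
    -- conclude
    rw [hcxy, ex, ey]
    have hfin : (QuotientGroup.mk (⁅u * x, v * y⁆ : F) : F ⧸ N)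
        = ⁅(QuotientGroup.mk u : F ⧸ N) * QuotientGroup.mk x,
           (QuotientGroup.mk v : F ⧸ N) * QuotientGroup.mk y⁆ := by
      simp [commutatorElement_def]; group
    have hU' : ∀ q : F ⧸ N, (QuotientGroup.mk u : F ⧸ N) * q = q * QuotientGroup.mk u :=
      fun q => QuotientGroup.induction_on q hU
    rw [hfin, FRcommAux _ _ _ _ hU' hXV hCV]
    simp [commutatorElement_def]

end FRkey
section FRkey2

variable {F H : Type*} [Group F] [Group H]

theorem FRkeyA (θ : H →* MulAut F)
    (ih0 : ∀ j, ∀ (h : H), ∀ f ∈ (⊤ : Subgroup F).lowerCentralSeries j,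
      θ h f * f⁻¹ ∈ (⊤ : Subgroup F).lowerCentralSeries (j + 1))
    (i : ℕ)
    (ihi : ∀ j, ∀ h ∈ (⊤ : Subgroup H).lowerCentralSeries i, ∀ f ∈ (⊤ : Subgroup F).lowerCentralSeries j,
      θ h f * f⁻¹ ∈ (⊤ : Subgroup F).lowerCentralSeries (i + j + 1)) :
    ∀ h ∈ (⊤ : Subgroup H).lowerCentralSeries (i + 1), ∀ f : F,
      θ h f * f⁻¹ ∈ (⊤ : Subgroup F).lowerCentralSeries (i + 1 + 1) := by
  set N := (⊤ : Subgroup F).lowerCentralSeries (i + 1 + 1) with hNdef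
  let T : Subgroup H :=
    { carrier := {h | ∀ f : F, (QuotientGroup.mk (θ h f) : F ⧸ N) = QuotientGroup.mk f}
      one_mem' := by intro f; simp
      mul_mem' := by
        intro a b ha hb f
        simp only [Set.mem_setOf_eq] at ha hb ⊢
        rw [map_mul, MulAut.mul_apply, ha (θ b f), hb f]
      inv_mem' := by
        intro a ha f
        simp only [Set.mem_setOf_eq] at ha ⊢
        have := ha (θ a⁻¹ f)
        have e : θ a (θ a⁻¹ f) = f := by
          rw [← MulAut.mul_apply, ← map_mul, mul_inv_cancel, map_one]; rfl
        rw [e] at this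
        exact this.symm }
  suffices hs : (⊤ : Subgroup H).lowerCentralSeries (i + 1) ≤ T by
    intro h hh f
    rw [FRmem_iff_mk_eq (N := N)]
    exact hs hh f
  have e : (⊤ : Subgroup H).lowerCentralSeries (i + 1) = ⁅(⊤ : Subgroup H).lowerCentralSeries i, ⊤⁆ := rfl
  rw [e, Subgroup.commutator_le]
  intro a ha b _
  intro f
  -- set-up
  obtain ⟨u, hudef⟩ : ∃ u, u = θ a⁻¹ (θ b⁻¹ f) := ⟨_, rfl⟩
  have hf : θ b (θ a u) = f := by
    rw [hudef, ← MulAut.mul_apply, ← MulAut.mul_apply, ← MulAut.mul_apply, ← map_mul, ← map_mul,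
      ← map_mul]
    have : b * a * a⁻¹ * b⁻¹ = 1 := by group
    rw [this, map_one]; rfl
  have hcomm : θ ⁅a, b⁆ f = θ a (θ b u) := by
    rw [hudef, commutatorElement_def, ← MulAut.mul_apply, ← MulAut.mul_apply,
      ← MulAut.mul_apply, ← map_mul, ← map_mul, ← map_mul]
  obtain ⟨v, hvdef⟩ : ∃ v, v = θ b u * u⁻¹ := ⟨_, rfl⟩
  obtain ⟨w, hwdef⟩ : ∃ w, w = θ a u * u⁻¹ := ⟨_, rfl⟩
  have hv1 : v ∈ (⊤ : Subgroup F).lowerCentralSeries 1 := hvdef ▸ ih0 0 b u (Subgroup.mem_top u)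
  have hw : w ∈ (⊤ : Subgroup F).lowerCentralSeries (i + 1) := hwdef ▸ ihi 0 a ha u (Subgroup.mem_top u)
  have ebu : θ b u = v * u := by rw [hvdef]; group
  have eau : θ a u = w * u := by rw [hwdef]; group
  have hav : (QuotientGroup.mk (θ a v) : F ⧸ N) = QuotientGroup.mk v := by
    rw [← FRmem_iff_mk_eq]
    exact ihi 1 a ha v hv1
  have hbw : (QuotientGroup.mk (θ b w) : F ⧸ N) = QuotientGroup.mk w := by
    rw [← FRmem_iff_mk_eq]
    exact ih0 (i + 1) b w hw
  have hvw : (QuotientGroup.mk v : F ⧸ N) * QuotientGroup.mk w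
      = QuotientGroup.mk w * QuotientGroup.mk v := by
    apply FRquotCommute
    show ⁅v, w⁆ ∈ (⊤ : Subgroup F).lowerCentralSeries (i + 1 + 1)
    have : ⁅v, w⁆ ∈ ⁅(⊤ : Subgroup F).lowerCentralSeries 1, (⊤ : Subgroup F).lowerCentralSeries (i + 1)⁆ :=
      Subgroup.commutator_mem_commutator hv1 hw
    have h2 := FRlcs_comm (G := F) (i + 1) 1 this
    refine Subgroup.lowerCentralSeries_antitone _ ?_ h2
    omega
  show (QuotientGroup.mk (θ ⁅a, b⁆ f) : F ⧸ N) = QuotientGroup.mk f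
  calc (QuotientGroup.mk (θ ⁅a, b⁆ f) : F ⧸ N)
      = QuotientGroup.mk (θ a (θ b u)) := by rw [hcomm]
    _ = QuotientGroup.mk (θ a v) * QuotientGroup.mk (θ a u) := by
        rw [ebu, map_mul, QuotientGroup.mk_mul]
    _ = QuotientGroup.mk v * (QuotientGroup.mk w * QuotientGroup.mk u) := by
        rw [hav, eau, QuotientGroup.mk_mul]
    _ = QuotientGroup.mk w * QuotientGroup.mk v * QuotientGroup.mk u := by
        rw [← mul_assoc, hvw]
    _ = QuotientGroup.mk (θ b w) * QuotientGroup.mk (θ b u) := by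
        rw [hbw, ebu, QuotientGroup.mk_mul, mul_assoc]
    _ = QuotientGroup.mk (θ b (θ a u)) := by rw [eau, map_mul, QuotientGroup.mk_mul]
    _ = QuotientGroup.mk f := by rw [hf]

theorem FRkey (θ : H →* MulAut F)
    (h0 : ∀ (h : H) (f : F), θ h f * f⁻¹ ∈ (⊤ : Subgroup F).lowerCentralSeries 1) :
    ∀ i j, ∀ h ∈ (⊤ : Subgroup H).lowerCentralSeries i, ∀ f ∈ (⊤ : Subgroup F).lowerCentralSeries j,
      θ h f * f⁻¹ ∈ (⊤ : Subgroup F).lowerCentralSeries (i + j + 1) := by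
  have base : ∀ j, ∀ (h : H), ∀ f ∈ (⊤ : Subgroup F).lowerCentralSeries j,
      θ h f * f⁻¹ ∈ (⊤ : Subgroup F).lowerCentralSeries (j + 1) := by
    intro j h f hf
    have := FRkeyLevel θ 0 (fun h _ f => h0 h f) j h (Subgroup.mem_top h) f hf
    simpa using this
  intro i
  induction i with
  | zero =>
    intro j h _ f hf
    have := base j h f hf
    simpa [Nat.zero_add] using this
  | succ i ihi =>
    exact FRkeyLevel θ (i + 1) (FRkeyA θ base i ihi)

end FRkey2

/-- Falk–Randell: given a split short exact sequence `1 → F → G → H → 1` such that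
the induced (conjugation) action of `H` on the abelianization of `F` is trivial,
the induced sequence `1 → F/Γ^k F → G/Γ^k G → H/Γ^k H` is exact for every `k`.
(Here `lowerCentralSeries · k` is the `(k+1)`-st term `Γ^{k+1}` of the lower
central series, so all `k : ℕ` are covered.) -/
theorem stmt0 {F G H : Type*} [Group F] [Group G] [Group H]
    (i : F →* G) (π : G →* H) (s : H →* G)
    (hinj : Function.Injective i) (hsurj : Function.Surjective π)
    (hexact : i.range = π.ker)
    (hsec : π.comp s = MonoidHom.id H)
    (htriv : ∀ (h : H) (f : F), ∃ f' : F,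
      i f' = s h * i f * (s h)⁻¹ ∧ Abelianization.of f' = Abelianization.of f)
    (k : ℕ)
    (φ : F ⧸ (⊤ : Subgroup F).lowerCentralSeries k →* G ⧸ (⊤ : Subgroup G).lowerCentralSeries k)
    (ψ : G ⧸ (⊤ : Subgroup G).lowerCentralSeries k →* H ⧸ (⊤ : Subgroup H).lowerCentralSeries k)
    (hφ : ∀ f : F, φ (QuotientGroup.mk' ((⊤ : Subgroup F).lowerCentralSeries k) f) =
      QuotientGroup.mk' ((⊤ : Subgroup G).lowerCentralSeries k) (i f))
    (hψ : ∀ g : G, ψ (QuotientGroup.mk' ((⊤ : Subgroup G).lowerCentralSeries k) g) =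
      QuotientGroup.mk' ((⊤ : Subgroup H).lowerCentralSeries k) (π g)) :
    Function.Injective φ ∧ Function.Surjective ψ ∧ φ.range = ψ.ker := by
  -- basic consequences of exactness and the splitting
  have hπi : ∀ f : F, π (i f) = 1 := by
    intro f
    have hm : i f ∈ π.ker := hexact ▸ ⟨f, rfl⟩
    exact MonoidHom.mem_ker.mp hm
  have hπs : ∀ h : H, π (s h) = h := fun h => DFunLike.congr_fun hsec h
  -- construct the conjugation action of `H` on `F`
  have hex : ∀ (h : H) (f : F), ∃ f' : F, i f' = s h * i f * (s h)⁻¹ := by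
    intro h f
    have hm : s h * i f * (s h)⁻¹ ∈ π.ker := by
      rw [MonoidHom.mem_ker, map_mul, map_mul, map_inv, hπi, mul_one, mul_inv_cancel]
    rw [← hexact] at hm
    exact hm
  choose t ht using hex
  have tmul : ∀ (h : H) (x y : F), t h (x * y) = t h x * t h y := by
    intro h x y; apply hinj
    rw [map_mul, ht, ht, ht, map_mul]; group
  have tcomp : ∀ (h₁ h₂ : H) (f : F), t (h₁ * h₂) f = t h₁ (t h₂ f) := by
    intro h₁ h₂ f; apply hinj
    rw [ht, ht, ht, map_mul]; group
  have tone : ∀ f : F, t 1 f = f := by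
    intro f; apply hinj; rw [ht, map_one]; group
  have tinv : ∀ (h : H) (f : F), t h⁻¹ (t h f) = f := by
    intro h f; apply hinj; rw [ht, ht, map_inv]; group
  have tinv' : ∀ (h : H) (f : F), t h (t h⁻¹ f) = f := by
    intro h f; apply hinj; rw [ht, ht, map_inv]; group
  let θ : H →* MulAut F :=
    { toFun := fun h =>
        { toFun := t h
          invFun := t h⁻¹
          left_inv := tinv h
          right_inv := tinv' h
          map_mul' := tmul h }
      map_one' := by ext f; exact tone f
      map_mul' := by intro h₁ h₂; ext f; exact tcomp h₁ h₂ f }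
  have hθ : ∀ (h : H) (f : F), i (θ h f) = s h * i f * (s h)⁻¹ := ht
  -- the triviality hypothesis, expressed via the action
  have h0 : ∀ (h : H) (f : F), θ h f * f⁻¹ ∈ (⊤ : Subgroup F).lowerCentralSeries 1 := by
    intro h f
    obtain ⟨f', h1, h2⟩ := htriv h f
    have hf' : f' = θ h f := hinj (by rw [h1, hθ])
    rw [← hf']
    exact (FRmem_iff_mk_eq (N := commutator F)).mpr h2
  have key := FRkey θ h0
  have hslcs : ∀ n, ∀ h ∈ (⊤ : Subgroup H).lowerCentralSeries n, s h ∈ (⊤ : Subgroup G).lowerCentralSeries n :=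
    fun n h hh => Subgroup.lowerCentralSeries.map s n ⟨h, hh, rfl⟩
  have hθlcs : ∀ (h : H) (n : ℕ), ∀ f ∈ (⊤ : Subgroup F).lowerCentralSeries n,
      θ h f ∈ (⊤ : Subgroup F).lowerCentralSeries n :=
    fun h n f hf => Subgroup.lowerCentralSeries.map (θ h).toMonoidHom n ⟨f, hf, rfl⟩
  -- decomposition of an arbitrary element of `G`
  have hdec0 : ∀ g : G, ∃ f : F, g = i f * s (π g) := by
    intro g
    have hm : g * (s (π g))⁻¹ ∈ π.ker := by
      rw [MonoidHom.mem_ker, map_mul, map_inv, hπs, mul_inv_cancel]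
    rw [← hexact] at hm
    obtain ⟨f, hf⟩ := hm
    exact ⟨f, by rw [hf]; group⟩
  -- the Falk–Randell decomposition of `Γ^n G`
  have hB : ∀ n, ∀ g ∈ (⊤ : Subgroup G).lowerCentralSeries n,
      ∃ f ∈ (⊤ : Subgroup F).lowerCentralSeries n, ∃ h ∈ (⊤ : Subgroup H).lowerCentralSeries n, g = i f * s h := by
    intro n
    induction n with
    | zero =>
      intro g _
      obtain ⟨f, hf⟩ := hdec0 g
      exact ⟨f, Subgroup.mem_top f, π g, Subgroup.mem_top _, hf⟩
    | succ n ihn =>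
      let S : Subgroup G :=
        { carrier := {g | ∃ f ∈ (⊤ : Subgroup F).lowerCentralSeries (n + 1),
            ∃ h ∈ (⊤ : Subgroup H).lowerCentralSeries (n + 1), g = i f * s h}
          one_mem' := ⟨1, one_mem _, 1, one_mem _, by simp⟩
          mul_mem' := by
            rintro g₁ g₂ ⟨f₁, hf₁, h₁, hh₁, rfl⟩ ⟨f₂, hf₂, h₂, hh₂, rfl⟩
            refine ⟨f₁ * θ h₁ f₂, mul_mem hf₁ (hθlcs h₁ _ f₂ hf₂), h₁ * h₂,
              mul_mem hh₁ hh₂, ?_⟩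
            rw [map_mul, map_mul, hθ]
            group
          inv_mem' := by
            rintro g ⟨f, hf, h, hh, rfl⟩
            refine ⟨θ h⁻¹ f⁻¹, hθlcs h⁻¹ _ f⁻¹ (inv_mem hf), h⁻¹, inv_mem hh, ?_⟩
            rw [hθ, map_inv i, map_inv s]
            group }
      intro g hg
      suffices hs : (⊤ : Subgroup G).lowerCentralSeries (n + 1) ≤ S from hs hg
      have e : (⊤ : Subgroup G).lowerCentralSeries (n + 1) = ⁅(⊤ : Subgroup G).lowerCentralSeries n, ⊤⁆ := rfl
      rw [e, Subgroup.commutator_le]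
      intro a ha b _
      obtain ⟨f, hf, h, hh, rfl⟩ := ihn a ha
      obtain ⟨f', hb⟩ := hdec0 b
      set h' := π b with hh'
      -- the four pieces
      have hP1 : i f * ⁅s h, i f'⁆ * (i f)⁻¹ ∈ S := by
        have hz : θ h f' * f'⁻¹ ∈ (⊤ : Subgroup F).lowerCentralSeries (n + 1) :=
          key n 0 h hh f' (Subgroup.mem_top f')
        have hz2 : f * (θ h f' * f'⁻¹) * f⁻¹ ∈ (⊤ : Subgroup F).lowerCentralSeries (n + 1) :=
          (Subgroup.lowerCentralSeries_normal ⊤ (n + 1)).conj_mem _ hz f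
        refine ⟨f * (θ h f' * f'⁻¹) * f⁻¹, hz2, 1, one_mem _, ?_⟩
        simp only [map_one, mul_one, map_mul, map_inv, hθ, commutatorElement_def]
      have hP2 : i f * i f' * ⁅s h, s h'⁆ * (i f')⁻¹ * (i f)⁻¹ ∈ S := by
        have hc : ⁅h, h'⁆ ∈ (⊤ : Subgroup H).lowerCentralSeries (n + 1) :=
          Subgroup.commutator_mem_commutator hh (Subgroup.mem_top h')
        have hz : θ ⁅h, h'⁆ (f * f') * (f * f')⁻¹ ∈ (⊤ : Subgroup F).lowerCentralSeries (n + 2) :=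
          key (n + 1) 0 ⁅h, h'⁆ hc (f * f') (Subgroup.mem_top _)
        have hz1 : (f * f') * (θ ⁅h, h'⁆ (f * f'))⁻¹ ∈ (⊤ : Subgroup F).lowerCentralSeries (n + 1) := by
          have := inv_mem (Subgroup.lowerCentralSeries_antitone _ (by omega : n + 1 ≤ n + 2) hz)
          simpa [mul_inv_rev] using this
        refine ⟨(f * f') * (θ ⁅h, h'⁆ (f * f'))⁻¹, hz1, ⁅h, h'⁆, hc, ?_⟩
        have hsc : ⁅s h, s h'⁆ = s ⁅h, h'⁆ := (map_commutatorElement s h h').symm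
        rw [hsc, map_mul i, map_inv i, hθ, map_mul i]
        group
      have hP3 : ⁅i f, i f'⁆ ∈ S := by
        have hz : ⁅f, f'⁆ ∈ (⊤ : Subgroup F).lowerCentralSeries (n + 1) :=
          Subgroup.commutator_mem_commutator hf (Subgroup.mem_top f')
        refine ⟨⁅f, f'⁆, hz, 1, one_mem _, ?_⟩
        rw [map_one, mul_one, map_commutatorElement]
      have hP4 : i f' * ⁅i f, s h'⁆ * (i f')⁻¹ ∈ S := by
        have hz : θ h' f * f⁻¹ ∈ (⊤ : Subgroup F).lowerCentralSeries (n + 1) := by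
          have := key 0 n h' (Subgroup.mem_top h') f hf
          simpa using this
        have hz1 : f * (θ h' f)⁻¹ ∈ (⊤ : Subgroup F).lowerCentralSeries (n + 1) := by
          have := inv_mem hz
          simpa [mul_inv_rev] using this
        have hz2 : f' * (f * (θ h' f)⁻¹) * f'⁻¹ ∈ (⊤ : Subgroup F).lowerCentralSeries (n + 1) :=
          (Subgroup.lowerCentralSeries_normal ⊤ (n + 1)).conj_mem _ hz1 f'
        refine ⟨f' * (f * (θ h' f)⁻¹) * f'⁻¹, hz2, 1, one_mem _, ?_⟩
        simp only [map_one, mul_one, map_mul, map_inv, hθ, commutatorElement_def]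
        group
      have hfactor : ∀ x p y q : G, ⁅x * p, y * q⁆ =
          (x * ⁅p, y⁆ * x⁻¹) * (x * y * ⁅p, q⁆ * y⁻¹ * x⁻¹) * ⁅x, y⁆ * (y * ⁅x, q⁆ * y⁻¹) := by
        intro x p y q
        simp only [commutatorElement_def]
        group
      rw [hb, hfactor]
      exact S.mul_mem (S.mul_mem (S.mul_mem hP1 hP2) hP3) hP4
  refine ⟨?_, ?_, ?_⟩
  · -- injectivity of φ
    intro x y hxy
    obtain ⟨f, rfl⟩ := QuotientGroup.mk_surjective x
    obtain ⟨f', rfl⟩ := QuotientGroup.mk_surjective y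
    have e1 := hφ f
    have e2 := hφ f'
    simp only [QuotientGroup.mk'_apply] at e1 e2
    have hmk : (QuotientGroup.mk (i f) : G ⧸ (⊤ : Subgroup G).lowerCentralSeries k)
        = QuotientGroup.mk (i f') := by rw [← e1, ← e2]; exact hxy
    have hmem : (i f)⁻¹ * i f' ∈ (⊤ : Subgroup G).lowerCentralSeries k := QuotientGroup.eq.mp hmk
    have hmem2 : i (f⁻¹ * f') ∈ (⊤ : Subgroup G).lowerCentralSeries k := by
      rw [map_mul, map_inv]; exact hmem
    obtain ⟨f₁, hf₁, h₁, hh₁, heq⟩ := hB k _ hmem2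
    have hh1 : h₁ = 1 := by
      have hp := hπi (f⁻¹ * f')
      rw [heq, map_mul, hπi, hπs, one_mul] at hp
      exact hp
    rw [hh1, map_one, mul_one] at heq
    have hff : f⁻¹ * f' = f₁ := hinj heq
    have hmemF : f⁻¹ * f' ∈ (⊤ : Subgroup F).lowerCentralSeries k := hff ▸ hf₁
    exact QuotientGroup.eq.mpr hmemF
  · -- surjectivity of ψ
    intro y
    obtain ⟨h, rfl⟩ := QuotientGroup.mk_surjective y
    obtain ⟨g, rfl⟩ := hsurj h
    refine ⟨QuotientGroup.mk g, ?_⟩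
    have e2 := hψ g
    simpa only [QuotientGroup.mk'_apply] using e2
  · -- exactness in the middle
    apply le_antisymm
    · rintro x ⟨z, rfl⟩
      obtain ⟨f, rfl⟩ := QuotientGroup.mk_surjective z
      rw [MonoidHom.mem_ker]
      have e1 := hφ f
      have e2 := hψ (i f)
      simp only [QuotientGroup.mk'_apply] at e1 e2
      rw [e1, e2, hπi]
      simp
    · intro x hx
      obtain ⟨g, rfl⟩ := QuotientGroup.mk_surjective x
      rw [MonoidHom.mem_ker] at hx
      have e2 := hψ g
      simp only [QuotientGroup.mk'_apply] at e2
      rw [e2] at hx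
      have hπg : π g ∈ (⊤ : Subgroup H).lowerCentralSeries k := (QuotientGroup.eq_one_iff _).mp hx
      have hsg : s (π g) ∈ (⊤ : Subgroup G).lowerCentralSeries k := hslcs k _ hπg
      obtain ⟨f, hf⟩ := hdec0 g
      refine ⟨QuotientGroup.mk f, ?_⟩
      have e1 := hφ f
      simp only [QuotientGroup.mk'_apply] at e1
      rw [e1]
      refine QuotientGroup.eq.mpr ?_
      rw [hf]
      simpa [inv_mul_cancel_left] using hsg
end

section
/- Let G be a nilpotent group that is uniquely divisible and such that H₁(G, ℚ) = G^{ab} ⊗ ℚ is finite-dimensional over ℚ. Then every graded piece Γ^k G / Γ^{k+1} G of the lower central series of G is a finite-dimensional ℚ-vector space. -/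
open scoped TensorProduct
open scoped commutatorElement

section RatModule
variable {A : Type} [AddCommGroup A]

theorem UD.zsmul_inj (H : ∀ (a : A) (n : ℕ), 0 < n → ∃! b : A, n • b = a)
    {m : ℤ} (hm : m ≠ 0) {x y : A} (h : m • x = m • y) : x = y := by
  rcases lt_or_gt_of_ne hm with hm' | hm'
  · have : (-m).toNat • x = (-m).toNat • y := by
      have hnn : ((-m).toNat : ℤ) = -m := Int.toNat_of_nonneg (by omega)
      rw [← natCast_zsmul, ← natCast_zsmul, hnn, neg_zsmul, neg_zsmul, h]
    exact ((H ((-m).toNat • y) (-m).toNat (by omega)).unique this rfl)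
  · have : m.toNat • x = m.toNat • y := by
      have hnn : (m.toNat : ℤ) = m := Int.toNat_of_nonneg (by omega)
      rw [← natCast_zsmul, ← natCast_zsmul, hnn, h]
    exact ((H (m.toNat • y) m.toNat (by omega)).unique this rfl)

noncomputable def UD.smul (H : ∀ (a : A) (n : ℕ), 0 < n → ∃! b : A, n • b = a)
    (q : ℚ) (a : A) : A := q.num • (H a q.den q.den_pos).choose

theorem UD.den_smul (H : ∀ (a : A) (n : ℕ), 0 < n → ∃! b : A, n • b = a)
    (q : ℚ) (a : A) : (q.den : ℤ) • UD.smul H q a = q.num • a := by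
  have h := (H a q.den q.den_pos).choose_spec.1
  rw [UD.smul, smul_comm, natCast_zsmul, h]

theorem rat_num_eq (q : ℚ) : (q.num : ℚ) = q * q.den := by
  have hd : ((q.den : ℚ)) ≠ 0 := by exact_mod_cast q.den_pos.ne'
  exact ((eq_div_iff hd).mp (Rat.num_div_den q).symm).symm

theorem rat_add_cross (q r : ℚ) :
    ((q.den : ℤ) * r.den) * (q + r).num = (q + r).den * (q.num * r.den + r.num * q.den) := by
  have : (((q.den : ℤ) * r.den) * (q + r).num : ℚ) =
      (((q + r).den : ℤ) * (q.num * r.den + r.num * q.den) : ℤ) := by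
    push_cast
    rw [rat_num_eq q, rat_num_eq r, rat_num_eq (q + r)]; ring
  exact_mod_cast this

theorem rat_mul_cross (q r : ℚ) :
    ((q.den : ℤ) * r.den) * (q * r).num = (q * r).den * (q.num * r.num) := by
  have : (((q.den : ℤ) * r.den) * (q * r).num : ℚ) =
      (((q * r).den : ℤ) * (q.num * r.num) : ℤ) := by
    push_cast
    rw [rat_num_eq q, rat_num_eq r, rat_num_eq (q * r)]; ring
  exact_mod_cast this

noncomputable def UD.ratModule (H : ∀ (a : A) (n : ℕ), 0 < n → ∃! b : A, n • b = a) :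
    Module ℚ A :=
  letI : SMul ℚ A := ⟨UD.smul H⟩
  have den_smul' : ∀ (q : ℚ) (a : A), (q.den : ℤ) • (q • a) = q.num • a := UD.den_smul H
  have dq : ∀ q : ℚ, ((q.den : ℤ)) ≠ 0 := fun q => by exact_mod_cast q.den_pos.ne'
  { one_smul := fun a => by
      apply UD.zsmul_inj H (dq 1)
      rw [den_smul']; norm_num
    mul_smul := fun q r a => by
      apply UD.zsmul_inj H (m := ((q.den : ℤ) * r.den) * (q * r).den)
        (mul_ne_zero (mul_ne_zero (dq q) (dq r)) (dq (q * r)))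
      have e1 : (((q.den : ℤ) * r.den) * (q * r).den) • ((q * r) • a) =
          (((q.den : ℤ) * r.den) * (q * r).num) • a := by
        rw [mul_smul, den_smul', ← mul_smul]
      have e2 : ((((q * r).den : ℤ) * r.den) * q.den) • (q • (r • a)) =
          (((q * r).den : ℤ) * (q.num * r.num)) • a := by
        rw [mul_smul, den_smul' q (r • a), smul_comm _ q.num, mul_smul,
          den_smul' r a]
        rw [← mul_smul, ← mul_smul]
        exact congrArg (· • a) (by ring)
      rw [e1, show ((q.den : ℤ) * r.den * (q * r).den) • q • r • a =
          (((q * r).den : ℤ) * r.den * q.den) • q • r • a from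
          congrArg (· • q • r • a) (by ring), e2]
      exact congrArg (· • a) (rat_mul_cross q r)
    smul_zero := fun q => by
      apply UD.zsmul_inj H (dq q)
      rw [den_smul']; simp
    smul_add := fun q a b => by
      apply UD.zsmul_inj H (dq q)
      rw [smul_add, den_smul', den_smul', den_smul', smul_add]
    add_smul := fun q r a => by
      apply UD.zsmul_inj H (m := ((q.den : ℤ) * r.den) * (q + r).den)
        (mul_ne_zero (mul_ne_zero (dq q) (dq r)) (dq (q + r)))
      have e1 : (((q.den : ℤ) * r.den) * (q + r).den) • ((q + r) • a) =
          (((q.den : ℤ) * r.den) * (q + r).num) • a := by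
        rw [mul_smul, den_smul', ← mul_smul]
      have e2 : ((((q + r).den : ℤ) * r.den) * q.den) • (q • a) =
          (((q + r).den : ℤ) * r.den * q.num) • a := by
        rw [mul_smul, den_smul', ← mul_smul]
      have e3 : ((((q + r).den : ℤ) * q.den) * r.den) • (r • a) =
          (((q + r).den : ℤ) * q.den * r.num) • a := by
        rw [mul_smul, den_smul', ← mul_smul]
      rw [e1, smul_add,
        show (((q.den : ℤ) * r.den) * (q + r).den) • (q • a) =
          ((((q + r).den : ℤ) * r.den) * q.den) • (q • a) from
          congrArg (· • (q • a)) (by ring),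
        show (((q.den : ℤ) * r.den) * (q + r).den) • (r • a) =
          ((((q + r).den : ℤ) * q.den) * r.den) • (r • a) from
          congrArg (· • (r • a)) (by ring), e2, e3, ← add_smul]
      exact congrArg (· • a) (by rw [rat_add_cross q r]; ring)
    zero_smul := fun a => by
      show UD.smul H 0 a = 0
      rw [UD.smul]; simp }

end RatModule

section LCS
variable {G : Type} [Group G]

open Subgroup QuotientGroup

theorem lcs_central {m : ℕ} {z : G} (hz : z ∈ (⊤ : Subgroup G).lowerCentralSeries m) :
    (z : G ⧸ (⊤ : Subgroup G).lowerCentralSeries (m+1)) ∈ Subgroup.center (G ⧸ (⊤ : Subgroup G).lowerCentralSeries (m+1)) := by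
  rw [Subgroup.mem_center_iff]
  intro g
  refine QuotientGroup.induction_on g fun y => ?_
  rw [← QuotientGroup.mk_mul, ← QuotientGroup.mk_mul]
  rw [QuotientGroup.eq]
  have : (y * z)⁻¹ * (z * y) = ⁅z⁻¹, y⁻¹⁆ := by group
  rw [this]
  exact commutator_mem_commutator (inv_mem hz) (mem_top _)

theorem lcs_conj_mk {m : ℕ} {c : G} (hc : c ∈ (⊤ : Subgroup G).lowerCentralSeries (m+1)) (t : G) :
    ((t * c * t⁻¹ : G) : G ⧸ (⊤ : Subgroup G).lowerCentralSeries (m+2)) = (c : G ⧸ (⊤ : Subgroup G).lowerCentralSeries (m+2)) := by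
  rw [QuotientGroup.eq]
  have : (t * c * t⁻¹)⁻¹ * c = ⁅c⁻¹, t⁆⁻¹ * 1 := by group
  rw [this, mul_one]
  exact inv_mem (commutator_mem_commutator (inv_mem hc) (mem_top _))

theorem lcs_comm_pow {m : ℕ} {p : G} (hp : p ∈ (⊤ : Subgroup G).lowerCentralSeries m) (t : G) (n : ℕ) :
    ((⁅p, t^n⁆ : G) : G ⧸ (⊤ : Subgroup G).lowerCentralSeries (m+2)) =
      ((⁅p, t⁆ : G) : G ⧸ (⊤ : Subgroup G).lowerCentralSeries (m+2)) ^ n := by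
  induction n with
  | zero => simp; exact (pow_zero _).symm
  | succ n ih =>
    have hid : ⁅p, t^(n+1)⁆ = ⁅p, t⁆ * (t * ⁅p, t^n⁆ * t⁻¹) := by
      rw [pow_succ']; group
    have hmem : ⁅p, t^n⁆ ∈ (⊤ : Subgroup G).lowerCentralSeries (m+1) :=
      commutator_mem_commutator hp (mem_top _)
    rw [hid, QuotientGroup.mk_mul, lcs_conj_mk hmem, ih, pow_succ']

theorem lcs_moddiv (hdiv : ∀ (g : G) (n : ℕ), 0 < n → ∃! h : G, h ^ n = g)
    (m : ℕ) {g : G} (hg : g ∈ (⊤ : Subgroup G).lowerCentralSeries m) {n : ℕ} (hn : 0 < n) :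
    ∃ z ∈ (⊤ : Subgroup G).lowerCentralSeries m,
      ((z ^ n : G) : G ⧸ (⊤ : Subgroup G).lowerCentralSeries (m+1)) = (g : G ⧸ (⊤ : Subgroup G).lowerCentralSeries (m+1)) := by
  induction m with
  | zero =>
    obtain ⟨h, hh, -⟩ := hdiv g n hn
    exact ⟨h, trivial, by rw [hh]⟩
  | succ m _ =>
    refine closure_induction (k := { x | ∃ p ∈ (⊤ : Subgroup G).lowerCentralSeries m,
        ∃ q ∈ (⊤ : Subgroup G), p * q * p⁻¹ * q⁻¹ = x })
      (p := fun w _ => ∃ z ∈ (⊤ : Subgroup G).lowerCentralSeries (m+1),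
        ((z ^ n : G) : G ⧸ (⊤ : Subgroup G).lowerCentralSeries (m+2)) = (w : G ⧸ (⊤ : Subgroup G).lowerCentralSeries (m+2)))
      ?_ ?_ ?_ ?_ hg
    · rintro x ⟨p, hp, q, -, rfl⟩
      obtain ⟨t, ht, -⟩ := hdiv q n hn
      refine ⟨⁅p, t⁆, commutator_mem_commutator hp (mem_top _), ?_⟩
      have : p * q * p⁻¹ * q⁻¹ = ⁅p, t ^ n⁆ := by rw [ht]; rfl
      rw [this, lcs_comm_pow hp, QuotientGroup.mk_pow]
    · exact ⟨1, one_mem _, by simp⟩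
    · rintro x y hx hy ⟨z₁, hz₁, e₁⟩ ⟨z₂, hz₂, e₂⟩
      refine ⟨z₁ * z₂, mul_mem hz₁ hz₂, ?_⟩
      have hcom : Commute ((z₁ : G) : G ⧸ (⊤ : Subgroup G).lowerCentralSeries (m+2))
          ((z₂ : G) : G ⧸ (⊤ : Subgroup G).lowerCentralSeries (m+2)) :=
        ((Subgroup.mem_center_iff.mp (lcs_central hz₁)) _).symm
      rw [QuotientGroup.mk_pow, QuotientGroup.mk_mul, hcom.mul_pow,
        ← QuotientGroup.mk_pow, ← QuotientGroup.mk_pow, e₁, e₂, QuotientGroup.mk_mul]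
    · rintro x hx ⟨z, hz, e⟩
      refine ⟨z⁻¹, inv_mem hz, ?_⟩
      rw [inv_pow, QuotientGroup.mk_inv, QuotientGroup.mk_inv, e]

theorem lcs_div (hdiv : ∀ (g : G) (n : ℕ), 0 < n → ∃! h : G, h ^ n = g)
    [Group.IsNilpotent G]
    (k : ℕ) {g : G} (hg : g ∈ (⊤ : Subgroup G).lowerCentralSeries k) {n : ℕ} (hn : 0 < n) :
    ∃ h ∈ (⊤ : Subgroup G).lowerCentralSeries k, h ^ n = g := by
  have aux : ∀ j : ℕ, ∃ h ∈ (⊤ : Subgroup G).lowerCentralSeries k, (h ^ n)⁻¹ * g ∈ (⊤ : Subgroup G).lowerCentralSeries (k+j) := by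
    intro j
    induction j with
    | zero => exact ⟨1, one_mem _, by simpa using hg⟩
    | succ j ih =>
      obtain ⟨h, hh, hr⟩ := ih
      obtain ⟨z, hz, e⟩ := lcs_moddiv hdiv (k+j) hr hn
      refine ⟨h * z, mul_mem hh (Subgroup.lowerCentralSeries_antitone ⊤ (Nat.le_add_right k j) hz), ?_⟩
      show ((h * z) ^ n)⁻¹ * g ∈ (⊤ : Subgroup G).lowerCentralSeries (k+j+1)
      rw [← QuotientGroup.eq_one_iff (G := G) (N := (⊤ : Subgroup G).lowerCentralSeries (k+j+1))]
      have hcom : Commute ((h : G) : G ⧸ (⊤ : Subgroup G).lowerCentralSeries (k+j+1))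
          ((z : G) : G ⧸ (⊤ : Subgroup G).lowerCentralSeries (k+j+1)) :=
        (Subgroup.mem_center_iff.mp (lcs_central hz)) _
      rw [QuotientGroup.mk_mul, QuotientGroup.mk_inv, QuotientGroup.mk_pow,
        QuotientGroup.mk_mul, hcom.mul_pow]
      rw [← QuotientGroup.mk_pow, ← QuotientGroup.mk_pow, e, QuotientGroup.mk_mul,
        QuotientGroup.mk_inv]
      group
  obtain ⟨j, hj⟩ := Subgroup.nilpotent_iff_lowerCentralSeries.mp ‹_›
  obtain ⟨h, hh, hr⟩ := aux j
  have : (h ^ n)⁻¹ * g ∈ (⊥ : Subgroup G) := by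
    rw [← hj]
    exact Subgroup.lowerCentralSeries_antitone ⊤ (Nat.le_add_left j k) hr
  rw [Subgroup.mem_bot] at this
  refine ⟨h, hh, by
    have := congrArg (h ^ n * ·) this
    simpa [mul_assoc] using this.symm⟩

theorem lcs_rootclosed (hdiv : ∀ (g : G) (n : ℕ), 0 < n → ∃! h : G, h ^ n = g)
    [Group.IsNilpotent G]
    (k : ℕ) {g : G} {n : ℕ} (hn : 0 < n) (hg : g ^ n ∈ (⊤ : Subgroup G).lowerCentralSeries k) :
    g ∈ (⊤ : Subgroup G).lowerCentralSeries k := by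
  obtain ⟨h, hh, e⟩ := lcs_div hdiv k hg hn
  obtain ⟨h', -, hu⟩ := hdiv (g ^ n) n hn
  have : g = h := (hu g rfl).trans (hu h e).symm
  rwa [this]

end LCS

section Quot
open Subgroup QuotientGroup

variable (G : Type) [Group G]

abbrev lcsQ (k : ℕ) : Type :=
  (⊤ : Subgroup G).lowerCentralSeries k ⧸ ((⊤ : Subgroup G).lowerCentralSeries (k+1)).subgroupOf ((⊤ : Subgroup G).lowerCentralSeries k)

instance lcsQCommGroup (k : ℕ) : CommGroup (lcsQ G k) :=
  { (inferInstance : Group (lcsQ G k)) with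
    mul_comm := by
      intro a b
      refine QuotientGroup.induction_on a fun x => QuotientGroup.induction_on b fun y => ?_
      rw [← QuotientGroup.mk_mul, ← QuotientGroup.mk_mul, QuotientGroup.eq,
        Subgroup.mem_subgroupOf]
      have : (((x * y)⁻¹ * (y * x) : (⊤ : Subgroup G).lowerCentralSeries k) : G)
          = ⁅((y : G))⁻¹, ((x : G))⁻¹⁆ := by
        push_cast
        group
      rw [this]
      exact commutator_mem_commutator (inv_mem y.2) (Subgroup.mem_top _) }

variable {G}

theorem lcsQ_ud (hdiv : ∀ (g : G) (n : ℕ), 0 < n → ∃! h : G, h ^ n = g)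
    [Group.IsNilpotent G] (k : ℕ) :
    ∀ (a : Additive (lcsQ G k)) (n : ℕ), 0 < n → ∃! b : Additive (lcsQ G k), n • b = a := by
  have mult : ∀ (a : lcsQ G k) (n : ℕ), 0 < n → ∃! b : lcsQ G k, b ^ n = a := by
    intro a n hn
    have huniq : ∀ c : lcsQ G k, c ^ n = 1 → c = 1 := by
      intro c
      refine QuotientGroup.induction_on c fun x => ?_
      intro hx
      rw [← QuotientGroup.mk_pow, QuotientGroup.eq_one_iff, Subgroup.mem_subgroupOf] at hx
      rw [QuotientGroup.eq_one_iff, Subgroup.mem_subgroupOf]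
      exact lcs_rootclosed hdiv (k+1) hn (by push_cast at hx ⊢; exact hx)
    obtain ⟨x, rfl⟩ : ∃ x : (⊤ : Subgroup G).lowerCentralSeries k, QuotientGroup.mk x = a :=
      Quotient.exists_rep a
    obtain ⟨h, hh, he⟩ := lcs_div hdiv k x.2 hn
    have hxq : (QuotientGroup.mk (⟨h, hh⟩ : (⊤ : Subgroup G).lowerCentralSeries k) : lcsQ G k) ^ n
        = QuotientGroup.mk x := by
      rw [← QuotientGroup.mk_pow]
      congr 1
      exact Subtype.ext (by push_cast; exact he)
    refine ⟨QuotientGroup.mk ⟨h, hh⟩, hxq, ?_⟩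
    intro y hy
    have hy' : y ^ n = QuotientGroup.mk x := hy
    have h2 : (y * (QuotientGroup.mk (⟨h, hh⟩ : (⊤ : Subgroup G).lowerCentralSeries k))⁻¹ : lcsQ G k) ^ n = 1 := by
      rw [mul_pow, hy', inv_pow, hxq]
      exact mul_inv_cancel _
    have h3 := huniq _ h2
    rwa [mul_inv_eq_one] at h3
  intro a n hn
  obtain ⟨b, hb, hu⟩ := mult (Additive.toMul a) n hn
  refine ⟨Additive.ofMul b, ?_, ?_⟩
  · apply Additive.toMul.injective
    rw [toMul_nsmul, toMul_ofMul, hb]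
  · intro y hy
    have : (Additive.toMul y) ^ n = Additive.toMul a := by
      rw [← toMul_nsmul, hy]
    exact congrArg Additive.ofMul (hu _ this)

end Quot

section Phi
open Subgroup QuotientGroup

variable {G : Type} [Group G]

theorem mem_lcs_commutator {k : ℕ} {x : G} (g : G) (hx : x ∈ (⊤ : Subgroup G).lowerCentralSeries k) :
    ⁅g, x⁆ ∈ (⊤ : Subgroup G).lowerCentralSeries (k+1) := by
  have h : ⁅x, g⁆ ∈ (⊤ : Subgroup G).lowerCentralSeries (k+1) :=
    Subgroup.commutator_mem_commutator hx (Subgroup.mem_top g)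
  have e : ⁅g, x⁆ = ⁅x, g⁆⁻¹ := (commutatorElement_inv x g).symm
  rw [e]
  exact inv_mem h

/-- For `x ∈ Γᵏ`, the map `g ↦ [g,x] mod Γᵏ⁺²` is a homomorphism `G →* Γᵏ⁺¹/Γᵏ⁺²`. -/
def lcsPsi (k : ℕ) (x : (⊤ : Subgroup G).lowerCentralSeries k) : G →* lcsQ G (k+1) :=
  MonoidHom.mk' (fun g => QuotientGroup.mk ⟨⁅g, (x : G)⁆, mem_lcs_commutator g x.2⟩)
    (by
      intro a b
      rw [← QuotientGroup.mk_mul, QuotientGroup.eq, Subgroup.mem_subgroupOf]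
      set c : G := ⁅b, (x : G)⁆ with hc
      set d : G := ⁅a, (x : G)⁆ with hd
      have hcm : c ∈ (⊤ : Subgroup G).lowerCentralSeries (k+1) := mem_lcs_commutator b x.2
      have hwm : ⁅a, c⁻¹⁆ ∈ (⊤ : Subgroup G).lowerCentralSeries (k+2) :=
        mem_lcs_commutator a (inv_mem hcm)
      have hdm : d ∈ (⊤ : Subgroup G).lowerCentralSeries (k+1) := mem_lcs_commutator a x.2
      have h2 : ⁅d⁻¹, c⁻¹⁆ ∈ (⊤ : Subgroup G).lowerCentralSeries (k+2) :=
        mem_lcs_commutator d⁻¹ (inv_mem hcm)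
      have h1 : d⁻¹ * ⁅a, c⁻¹⁆ * (d⁻¹)⁻¹ ∈ (⊤ : Subgroup G).lowerCentralSeries (k+2) :=
        (Subgroup.lowerCentralSeries_normal ⊤ (k+2)).conj_mem _ hwm d⁻¹
      have key : ((((⟨⁅a * b, (x : G)⁆, mem_lcs_commutator (a*b) x.2⟩ :
            (⊤ : Subgroup G).lowerCentralSeries (k+1)))⁻¹ *
          (⟨⁅a, (x : G)⁆, mem_lcs_commutator a x.2⟩ *
           ⟨⁅b, (x : G)⁆, mem_lcs_commutator b x.2⟩) : (⊤ : Subgroup G).lowerCentralSeries (k+1)) : G)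
          = (d⁻¹ * ⁅a, c⁻¹⁆ * (d⁻¹)⁻¹) * ⁅d⁻¹, c⁻¹⁆ := by
        push_cast
        rw [hc, hd]
        group
      rw [key]
      exact mul_mem h1 h2)

theorem lcsPsi_apply (k : ℕ) (x : (⊤ : Subgroup G).lowerCentralSeries k) (g : G) :
    lcsPsi k x g = QuotientGroup.mk ⟨⁅g, (x : G)⁆, mem_lcs_commutator g x.2⟩ := rfl

theorem commutator_le_ker_of_comm {H : Type} [CommGroup H] (f : G →* H) :
    commutator G ≤ f.ker := by
  rw [commutator_def, Subgroup.commutator_le]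
  intro g₁ _ g₂ _
  rw [MonoidHom.mem_ker, map_commutatorElement]
  exact commutatorElement_eq_one_iff_commute.mpr (mul_comm _ _)

/-- Descent of `lcsPsi` to the abelianized bottom quotient. -/
def lcsChi (k : ℕ) (x : (⊤ : Subgroup G).lowerCentralSeries k) : lcsQ G 0 →* lcsQ G (k+1) :=
  QuotientGroup.lift _ ((lcsPsi k x).comp (Subgroup.subtype _))
    (by
      intro y hy
      rw [Subgroup.mem_subgroupOf] at hy
      have hmem : (y : G) ∈ commutator G := hy
      have h1 : lcsPsi k x (y : G) = 1 := commutator_le_ker_of_comm (lcsPsi k x) hmem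
      exact h1)

theorem lcsChi_apply (k : ℕ) (x : (⊤ : Subgroup G).lowerCentralSeries k) (y : (⊤ : Subgroup G).lowerCentralSeries 0) :
    lcsChi k x (QuotientGroup.mk y) = lcsPsi k x (y : G) := rfl

/-- The bi-homomorphism `Γᵏ/Γᵏ⁺¹ → Hom(G^{ab}, Γᵏ⁺¹/Γᵏ⁺²)`. -/
def lcsPhi (k : ℕ) : lcsQ G k →* (lcsQ G 0 →* lcsQ G (k+1)) :=
  QuotientGroup.lift _
    (MonoidHom.mk' (fun x => lcsChi k x)
      (by
        intro x y
        refine QuotientGroup.monoidHom_ext _ (MonoidHom.ext fun z => ?_)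
        simp only [MonoidHom.comp_apply, QuotientGroup.mk'_apply, MonoidHom.mul_apply]
        rw [lcsChi_apply, lcsChi_apply, lcsChi_apply, lcsPsi_apply, lcsPsi_apply, lcsPsi_apply]
        rw [← QuotientGroup.mk_mul, QuotientGroup.eq, Subgroup.mem_subgroupOf]
        set c : G := ⁅(z : G), (y : G)⁆ with hc
        have hcm : c ∈ (⊤ : Subgroup G).lowerCentralSeries (k+1) := mem_lcs_commutator (z : G) y.2
        have hmem : ⁅(x : G), c⁻¹⁆ ∈ (⊤ : Subgroup G).lowerCentralSeries (k+2) :=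
          mem_lcs_commutator (x : G) (inv_mem hcm)
        have key : ((((⟨⁅(z : G), ((x * y : (⊤ : Subgroup G).lowerCentralSeries k) : G)⁆,
              mem_lcs_commutator (z : G) (x * y).2⟩ :
              (⊤ : Subgroup G).lowerCentralSeries (k+1)))⁻¹ *
            (⟨⁅(z : G), (x : G)⁆, mem_lcs_commutator (z : G) x.2⟩ *
             ⟨⁅(z : G), (y : G)⁆, mem_lcs_commutator (z : G) y.2⟩) :
              (⊤ : Subgroup G).lowerCentralSeries (k+1)) : G)
            = ⁅(x : G), c⁻¹⁆ := by
          push_cast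
          rw [hc]
          group
        rw [key]
        exact hmem))
    (by
      intro x hx
      rw [Subgroup.mem_subgroupOf] at hx
      refine QuotientGroup.monoidHom_ext _ (MonoidHom.ext fun z => ?_)
      simp only [MonoidHom.comp_apply, QuotientGroup.mk'_apply, MonoidHom.one_apply]
      show lcsChi k x (QuotientGroup.mk z) = 1
      rw [lcsChi_apply, lcsPsi_apply, QuotientGroup.eq_one_iff, Subgroup.mem_subgroupOf]
      exact mem_lcs_commutator (z : G) hx)

theorem lcsPhi_apply (k : ℕ) (x : (⊤ : Subgroup G).lowerCentralSeries k) (y : (⊤ : Subgroup G).lowerCentralSeries 0) :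
    lcsPhi k (QuotientGroup.mk x) (QuotientGroup.mk y) = lcsPsi k x (y : G) := rfl

end Phi

section FinDim
open Subgroup QuotientGroup
open scoped TensorProduct

variable {G : Type} [Group G]

noncomputable def lcsQMod (hdiv : ∀ (g : G) (n : ℕ), 0 < n → ∃! h : G, h ^ n = g)
    [Group.IsNilpotent G] (k : ℕ) : Module ℚ (Additive (lcsQ G k)) :=
  UD.ratModule (lcsQ_ud hdiv k)

def lcsTheta : G →* lcsQ G 0 :=
  (QuotientGroup.mk' _).comp
    (MonoidHom.mk' (fun g => (⟨g, Subgroup.mem_top g⟩ : (⊤ : Subgroup G).lowerCentralSeries 0)) fun _ _ => rfl)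

theorem lcsTheta_surj : Function.Surjective (lcsTheta (G := G)) := by
  intro q
  obtain ⟨x, rfl⟩ : ∃ x : (⊤ : Subgroup G).lowerCentralSeries 0, QuotientGroup.mk x = q := Quotient.exists_rep q
  exact ⟨(x : G), congrArg QuotientGroup.mk (Subtype.ext rfl)⟩

theorem lcsQ_findim0 (hdiv : ∀ (g : G) (n : ℕ), 0 < n → ∃! h : G, h ^ n = g)
    [Group.IsNilpotent G]
    (hfd : FiniteDimensional ℚ (ℚ ⊗[ℤ] Additive (Abelianization G))) :
    letI := lcsQMod (G := G) hdiv 0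
    FiniteDimensional ℚ (Additive (lcsQ G 0)) := by
  letI := lcsQMod (G := G) hdiv 0
  let t : Additive (Abelianization G) →+ Additive (lcsQ G 0) :=
    MonoidHom.toAdditive (Abelianization.lift (lcsTheta (G := G)))
  let F : (ℚ ⊗[ℤ] Additive (Abelianization G)) →ₗ[ℚ] Additive (lcsQ G 0) :=
    TensorProduct.AlgebraTensorModule.lift
      (LinearMap.toSpanSingleton ℚ _ t.toIntLinearMap)
  refine Module.Finite.of_surjective F ?_
  intro a
  obtain ⟨g, hg⟩ := lcsTheta_surj (Additive.toMul a)
  refine ⟨(1 : ℚ) ⊗ₜ Additive.ofMul (Abelianization.of g), ?_⟩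
  show (1 : ℚ) • t (Additive.ofMul (Abelianization.of g)) = a
  rw [one_smul]
  show Additive.ofMul (Abelianization.lift (lcsTheta (G := G)) (Abelianization.of g)) = a
  rw [Abelianization.lift_apply_of, hg]
  rfl

theorem lcsQ_findim (hdiv : ∀ (g : G) (n : ℕ), 0 < n → ∃! h : G, h ^ n = g)
    [Group.IsNilpotent G]
    (hfd : FiniteDimensional ℚ (ℚ ⊗[ℤ] Additive (Abelianization G))) (k : ℕ) :
    letI := lcsQMod (G := G) hdiv k
    FiniteDimensional ℚ (Additive (lcsQ G k)) := by
  induction k with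
  | zero => exact lcsQ_findim0 hdiv hfd
  | succ k ih =>
    letI instk := lcsQMod (G := G) hdiv k
    letI inst0 := lcsQMod (G := G) hdiv 0
    letI instk1 := lcsQMod (G := G) hdiv (k+1)
    haveI hk : FiniteDimensional ℚ (Additive (lcsQ G k)) := ih
    haveI h0 : FiniteDimensional ℚ (Additive (lcsQ G 0)) := lcsQ_findim0 hdiv hfd
    let badd : Additive (lcsQ G k) →+ (Additive (lcsQ G 0) →ₗ[ℚ] Additive (lcsQ G (k+1))) :=
      { toFun := fun x => AddMonoidHom.toRatLinearMap
          (MonoidHom.toAdditive (lcsPhi k (Additive.toMul x)))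
        map_zero' := by
          apply LinearMap.ext; intro u
          show Additive.ofMul (lcsPhi k (Additive.toMul (0 : Additive (lcsQ G k)))
            (Additive.toMul u)) = 0
          rw [show Additive.toMul (0 : Additive (lcsQ G k)) = 1 from rfl, map_one]
          rfl
        map_add' := fun x y => by
          apply LinearMap.ext; intro u
          show Additive.ofMul (lcsPhi k (Additive.toMul (x + y)) (Additive.toMul u)) = _
          rw [show Additive.toMul (x + y) = Additive.toMul x * Additive.toMul y from rfl, map_mul]
          rfl }
    let F : (TensorProduct ℚ (Additive (lcsQ G k)) (Additive (lcsQ G 0)))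
        →ₗ[ℚ] Additive (lcsQ G (k+1)) :=
      TensorProduct.lift (AddMonoidHom.toRatLinearMap badd)
    refine Module.Finite.of_surjective F ?_
    intro a
    obtain ⟨w, hw⟩ : ∃ w : (⊤ : Subgroup G).lowerCentralSeries (k+1), QuotientGroup.mk w = Additive.toMul a :=
      Quotient.exists_rep _
    have main : ∀ (v : G) (hv : v ∈ Subgroup.closure { x | ∃ p ∈ (⊤ : Subgroup G).lowerCentralSeries k,
        ∃ q ∈ (⊤ : Subgroup G), p * q * p⁻¹ * q⁻¹ = x }),
        ∀ (hv' : v ∈ (⊤ : Subgroup G).lowerCentralSeries (k+1)),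
          ∃ s, F s = Additive.ofMul (QuotientGroup.mk (⟨v, hv'⟩ : (⊤ : Subgroup G).lowerCentralSeries (k+1))) := by
      intro v hv
      refine Subgroup.closure_induction ?_ ?_ ?_ ?_ hv
      · rintro x ⟨p, hp, q, -, rfl⟩ hv'
        refine ⟨-((Additive.ofMul (QuotientGroup.mk (⟨p, hp⟩ : (⊤ : Subgroup G).lowerCentralSeries k) : lcsQ G k))
          ⊗ₜ (Additive.ofMul (QuotientGroup.mk (⟨q, Subgroup.mem_top q⟩ :
            (⊤ : Subgroup G).lowerCentralSeries 0) : lcsQ G 0))), ?_⟩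
        rw [map_neg]
        have hF : F ((Additive.ofMul (QuotientGroup.mk (⟨p, hp⟩ : (⊤ : Subgroup G).lowerCentralSeries k) : lcsQ G k))
            ⊗ₜ (Additive.ofMul (QuotientGroup.mk (⟨q, Subgroup.mem_top q⟩ :
              (⊤ : Subgroup G).lowerCentralSeries 0) : lcsQ G 0)))
            = Additive.ofMul (lcsPsi k ⟨p, hp⟩ q) := by
          rw [show F ((Additive.ofMul (QuotientGroup.mk (⟨p, hp⟩ : (⊤ : Subgroup G).lowerCentralSeries k) : lcsQ G k))
            ⊗ₜ (Additive.ofMul (QuotientGroup.mk (⟨q, Subgroup.mem_top q⟩ :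
              (⊤ : Subgroup G).lowerCentralSeries 0) : lcsQ G 0))) = _ from TensorProduct.lift.tmul _ _]
          rfl
        rw [hF]
        have : (QuotientGroup.mk (⟨p * q * p⁻¹ * q⁻¹, hv'⟩ : (⊤ : Subgroup G).lowerCentralSeries (k+1)) : lcsQ G (k+1))
            = (lcsPsi k ⟨p, hp⟩ q)⁻¹ := by
          rw [lcsPsi_apply, ← QuotientGroup.mk_inv]
          congr 1
          apply Subtype.ext
          push_cast
          group
        rw [this]
        rfl
      · intro hv'
        refine ⟨0, ?_⟩
        rw [map_zero]
        have : (QuotientGroup.mk (⟨(1 : G), hv'⟩ : (⊤ : Subgroup G).lowerCentralSeries (k+1)) : lcsQ G (k+1)) = 1 := by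
          rw [show (⟨(1 : G), hv'⟩ : (⊤ : Subgroup G).lowerCentralSeries (k+1)) = 1 from Subtype.ext rfl, QuotientGroup.mk_one]
        rw [this]
        rfl
      · intro x y hx hy ihx ihy hv'
        obtain ⟨s1, e1⟩ := ihx hx
        obtain ⟨s2, e2⟩ := ihy hy
        refine ⟨s1 + s2, ?_⟩
        rw [map_add, e1, e2]
        have : (QuotientGroup.mk (⟨x * y, hv'⟩ : (⊤ : Subgroup G).lowerCentralSeries (k+1)) : lcsQ G (k+1))
            = QuotientGroup.mk (⟨x, hx⟩ : (⊤ : Subgroup G).lowerCentralSeries (k+1))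
              * QuotientGroup.mk (⟨y, hy⟩ : (⊤ : Subgroup G).lowerCentralSeries (k+1)) := by
          rw [← QuotientGroup.mk_mul]
          congr 1
        show _ = Additive.ofMul (QuotientGroup.mk (⟨x * y, hv'⟩ : (⊤ : Subgroup G).lowerCentralSeries (k+1)) : lcsQ G (k+1))
        rw [this]
        rfl
      · intro x hx ihx hv'
        obtain ⟨s1, e1⟩ := ihx hx
        refine ⟨-s1, ?_⟩
        rw [map_neg, e1]
        have : (QuotientGroup.mk (⟨x⁻¹, hv'⟩ : (⊤ : Subgroup G).lowerCentralSeries (k+1)) : lcsQ G (k+1))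
            = (QuotientGroup.mk (⟨x, hx⟩ : (⊤ : Subgroup G).lowerCentralSeries (k+1)) : lcsQ G (k+1))⁻¹ := by
          rw [← QuotientGroup.mk_inv]
          congr 1
        show _ = Additive.ofMul (QuotientGroup.mk (⟨x⁻¹, hv'⟩ : (⊤ : Subgroup G).lowerCentralSeries (k+1)) : lcsQ G (k+1))
        rw [this]
        rfl
    obtain ⟨s, hs⟩ := main (w : G) w.2 w.2
    refine ⟨s, ?_⟩
    rw [hs]
    show Additive.ofMul (QuotientGroup.mk _) = a
    rw [show (⟨(w : G), w.2⟩ : (⊤ : Subgroup G).lowerCentralSeries (k+1)) = w from Subtype.ext rfl, hw]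
    rfl

end FinDim

/-- For a nilpotent, uniquely divisible group `G` with `H₁(G, ℚ) = G^{ab} ⊗ ℚ`
finite-dimensional, each graded piece `Γ^k G / Γ^{k+1} G` of the lower central
series carries the structure of a finite-dimensional `ℚ`-vector space: there is a
finite-dimensional `ℚ`-vector space `V` and a surjection `Γ^k G → V` with kernel
`Γ^{k+1} G`. -/
theorem stmt4 {G : Type} [Group G] [Group.IsNilpotent G]
    (hdiv : ∀ (g : G) (n : ℕ), 0 < n → ∃! h : G, h ^ n = g)
    (hfd : FiniteDimensional ℚ (ℚ ⊗[ℤ] Additive (Abelianization G)))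
    (k : ℕ) :
    ∃ (V : Type) (_ : AddCommGroup V) (_ : Module ℚ V) (_ : FiniteDimensional ℚ V)
      (f : ((⊤ : Subgroup G).lowerCentralSeries k) →* Multiplicative V),
        Function.Surjective f ∧
        f.ker = ((⊤ : Subgroup G).lowerCentralSeries (k + 1)).subgroupOf ((⊤ : Subgroup G).lowerCentralSeries k) := by
  letI instmod := lcsQMod (G := G) hdiv k
  let e : lcsQ G k ≃* Multiplicative (Additive (lcsQ G k)) :=
    (MulEquiv.multiplicativeAdditive (lcsQ G k)).symm
  let f : ((⊤ : Subgroup G).lowerCentralSeries k) →* Multiplicative (Additive (lcsQ G k)) :=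
    e.toMonoidHom.comp (QuotientGroup.mk' _)
  refine ⟨Additive (lcsQ G k), inferInstance, instmod, lcsQ_findim hdiv hfd k, f, ?_, ?_⟩
  · intro v
    obtain ⟨q, hq⟩ := e.surjective v
    obtain ⟨x, hx⟩ := QuotientGroup.mk'_surjective
      (((⊤ : Subgroup G).lowerCentralSeries (k+1)).subgroupOf ((⊤ : Subgroup G).lowerCentralSeries k)) q
    refine ⟨x, ?_⟩
    show e (QuotientGroup.mk' _ x) = v
    rw [hx, hq]
  · ext x
    rw [MonoidHom.mem_ker]
    show e (QuotientGroup.mk' _ x) = 1 ↔ _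
    rw [MulEquiv.map_eq_one_iff]
    rw [← MonoidHom.mem_ker, QuotientGroup.ker_mk']
end
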